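/- For σ > 0 let Y_σ be a Gaussian random variable with mean 1 and variance σ², and let h_σ = tanh(Y_σ/σ²) be the spread of the AWGN(σ²) output. Then as σ → ∞, both the first and second moments of the spread decay like σ^{−2}: lim_{σ→∞} σ²·E[tanh(Y_σ/σ²)] = 1 and lim_{σ→∞} σ²·E[tanh²(Y_σ/σ²)] = 1. -/

import Mathlib

namespace SpreadAux

open Real MeasureTheory ProbabilityTheory Filter Set
open scoped ENNReal NNReal

lemma sinh_le_mul_cosh {x : ℝ} (hx : 0 ≤ x) : Real.sinh x ≤ x * Real.cosh x := by
  have hmono : Monotone (fun x : ℝ => x * Real.cosh x - Real.sinh x) := by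
    apply monotone_of_deriv_nonneg
    · exact (differentiable_id.mul Real.differentiable_cosh).sub Real.differentiable_sinh
    · intro y
      have hd : HasDerivAt (fun x : ℝ => x * Real.cosh x - Real.sinh x) (y * Real.sinh y) y := by
        have := ((hasDerivAt_id y).mul (Real.hasDerivAt_cosh y)).sub (Real.hasDerivAt_sinh y)
        refine this.congr_deriv ?_
        simp [id]
        try ring
      rw [hd.deriv]
      rcases le_total 0 y with h | h
      · exact mul_nonneg h (Real.sinh_nonneg_iff.2 h)
      · nlinarith [mul_nonneg (neg_nonneg.2 h) (neg_nonneg.2 (Real.sinh_nonpos_iff.2 h))]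
  have := hmono hx
  simpa using this

lemma tanh_le_self {x : ℝ} (hx : 0 ≤ x) : Real.tanh x ≤ x := by
  rw [Real.tanh_eq_sinh_div_cosh, div_le_iff₀ (Real.cosh_pos x)]
  exact sinh_le_mul_cosh hx

lemma tanh_nonneg {x : ℝ} (hx : 0 ≤ x) : 0 ≤ Real.tanh x := by
  rw [Real.tanh_eq_sinh_div_cosh]
  exact div_nonneg (Real.sinh_nonneg_iff.2 hx) (Real.cosh_pos x).le

lemma abs_tanh_le_abs (x : ℝ) : |Real.tanh x| ≤ |x| := by
  rcases le_total 0 x with h | h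
  · rw [abs_of_nonneg h, abs_of_nonneg (tanh_nonneg h)]
    exact tanh_le_self h
  · have h' : 0 ≤ -x := by linarith
    have h1 := tanh_le_self h'
    have h2 := tanh_nonneg h'
    rw [Real.tanh_neg] at h1 h2
    rw [abs_of_nonpos h, abs_of_nonpos (by linarith)]
    linarith

lemma abs_tanh_le_one (x : ℝ) : |Real.tanh x| ≤ 1 := by
  rw [Real.tanh_eq_sinh_div_cosh, abs_div, abs_of_pos (Real.cosh_pos x),
    div_le_one (Real.cosh_pos x)]
  nlinarith [Real.cosh_sq x, Real.cosh_pos x, abs_nonneg (Real.sinh x), sq_abs (Real.sinh x)]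

lemma abs_tanh_sub_self (x : ℝ) : |Real.tanh x - x| ≤ |x|^3 := by
  have hG : Monotone (fun x : ℝ => x^3 * Real.cosh x - x * Real.cosh x + Real.sinh x) := by
    apply monotone_of_deriv_nonneg
    · exact (((differentiable_pow 3).mul Real.differentiable_cosh).sub
        (differentiable_id.mul Real.differentiable_cosh)).add Real.differentiable_sinh
    · intro y
      have hd : HasDerivAt (fun x : ℝ => x^3 * Real.cosh x - x * Real.cosh x + Real.sinh x)
          (3*y^2 * Real.cosh y + y^3 * Real.sinh y - y * Real.sinh y) y := by
        have := (((hasDerivAt_pow 3 y).mul (Real.hasDerivAt_cosh y)).sub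
          ((hasDerivAt_id y).mul (Real.hasDerivAt_cosh y))).add (Real.hasDerivAt_sinh y)
        refine this.congr_deriv ?_
        simp [id]
        try ring
      rw [hd.deriv]
      have h1 : Real.sinh |y| ≤ |y| * Real.cosh |y| := sinh_le_mul_cosh (abs_nonneg y)
      have h2 : Real.cosh |y| = Real.cosh y := Real.cosh_abs y
      have h3 : 0 ≤ Real.sinh |y| := Real.sinh_nonneg_iff.2 (abs_nonneg y)
      have h4 : y * Real.sinh y = |y| * Real.sinh |y| := by
        rcases le_total 0 y with h | h
        · rw [abs_of_nonneg h]
        · rw [abs_of_nonpos h, Real.sinh_neg]; ring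
      have h5 : y^3 * Real.sinh y = |y|^3 * Real.sinh |y| := by
        rcases le_total 0 y with h | h
        · rw [abs_of_nonneg h]
        · rw [abs_of_nonpos h, Real.sinh_neg]; ring
      have h6 : y^2 = |y|^2 := (sq_abs y).symm
      have e1 : |y| * Real.sinh |y| ≤ |y|^2 * Real.cosh |y| := by
        nlinarith [mul_le_mul_of_nonneg_left h1 (abs_nonneg y)]
      have e2 : 0 ≤ |y|^2 * Real.cosh |y| :=
        mul_nonneg (sq_nonneg _) (Real.cosh_pos _).le
      have e3 : 0 ≤ |y|^3 * Real.sinh |y| :=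
        mul_nonneg (pow_nonneg (abs_nonneg y) 3) h3
      rw [h4, h5, h6, ← h2]
      linarith
  have key : ∀ x : ℝ, 0 ≤ x → x - Real.tanh x ≤ x^3 := by
    intro x hx
    have hm := hG hx
    simp only [Real.sinh_zero, Real.cosh_zero] at hm
    have hc := Real.cosh_pos x
    have heq : x - Real.tanh x = (x * Real.cosh x - Real.sinh x)/Real.cosh x := by
      rw [Real.tanh_eq_sinh_div_cosh]; field_simp
    rw [heq, div_le_iff₀ hc]
    nlinarith
  rcases le_total 0 x with h | h
  · rw [abs_of_nonneg h, abs_of_nonpos (by linarith [tanh_le_self h])]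
    linarith [key x h]
  · have h' : 0 ≤ -x := by linarith
    have hk := key _ h'
    rw [Real.tanh_neg] at hk
    have h2 : Real.tanh (-x) ≤ -x := tanh_le_self h'
    rw [Real.tanh_neg] at h2
    rw [abs_of_nonpos h, abs_of_nonneg (by linarith : (0:ℝ) ≤ Real.tanh x - x)]
    linarith

lemma abs_tanh_sq_sub_sq (x : ℝ) : |Real.tanh x^2 - x^2| ≤ 2*x^4 := by
  have h1 := abs_tanh_sub_self x
  have h2 := abs_tanh_le_abs x
  have key : |Real.tanh x^2 - x^2| = |Real.tanh x - x| * |Real.tanh x + x| := by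
    rw [← abs_mul]; ring_nf
  rw [key]
  have h3 : |Real.tanh x + x| ≤ 2 * |x| := by
    calc |Real.tanh x + x| ≤ |Real.tanh x| + |x| := abs_add_le _ _
    _ ≤ 2 * |x| := by linarith
  calc |Real.tanh x - x| * |Real.tanh x + x| ≤ |x|^3 * (2*|x|) := by
        exact mul_le_mul h1 h3 (abs_nonneg _) (pow_nonneg (abs_nonneg _) _)
    _ = 2 * |x|^4 := by ring
    _ = 2 * x^4 := by rw [← abs_pow]; rw [abs_of_nonneg (by positivity)]


lemma int_pow_exp (n : ℕ) : Integrable (fun x : ℝ => x ^ n * rexp (-x^2/2)) := by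
  have h := integrable_rpow_mul_exp_neg_mul_sq (b := (1:ℝ)/2) (by norm_num)
    (s := (n:ℝ)) (by exact_mod_cast lt_of_lt_of_le (by norm_num : (-1:ℝ) < 0) (Nat.cast_nonneg n))
  have : (fun x : ℝ => x ^ (n:ℝ) * rexp (-(1/2) * x^2)) = fun x : ℝ => x ^ n * rexp (-x^2/2) := by
    funext x
    rw [Real.rpow_natCast]
    ring_nf
  rwa [this] at h

lemma int_exp : Integrable (fun x : ℝ => rexp (-x^2/2)) := by
  have := int_pow_exp 0
  simpa using this

lemma integral_exp_half : ∫ x : ℝ, rexp (-x^2/2) = Real.sqrt (2*π) := by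
  have h := integral_gaussian (1/2)
  have e : (fun x : ℝ => rexp (-(1/2) * x^2)) = fun x : ℝ => rexp (-x^2/2) := by
    funext x; ring_nf
  rw [e] at h
  rw [h]
  norm_num
  rw [mul_comm]

lemma tendsto_exp_half : Tendsto (fun x : ℝ => rexp (-x^2/2)) (Filter.cocompact ℝ) (nhds 0) := by
  have h := tendsto_rpow_abs_mul_exp_neg_mul_sq_cocompact (by norm_num : (0:ℝ) < 1/2) 0
  refine h.congr fun x => ?_
  rw [Real.rpow_zero, one_mul]
  ring_nf

lemma tendsto_x_exp_half :
    Tendsto (fun x : ℝ => x * rexp (-x^2/2)) (Filter.cocompact ℝ) (nhds 0) := by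
  have h := tendsto_rpow_abs_mul_exp_neg_mul_sq_cocompact (by norm_num : (0:ℝ) < 1/2) 1
  apply squeeze_zero_norm _ h
  intro x
  rw [Real.rpow_one]
  rw [Real.norm_eq_abs, abs_mul, abs_of_nonneg (Real.exp_nonneg _)]
  apply le_of_eq
  congr 1
  ring_nf

lemma myTop : (atTop : Filter ℝ) ≤ Filter.cocompact ℝ := by
  rw [cocompact_eq_atBot_atTop]; exact le_sup_right

lemma myBot : (atBot : Filter ℝ) ≤ Filter.cocompact ℝ := by
  rw [cocompact_eq_atBot_atTop]; exact le_sup_left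

lemma hasDerivAt_negexp (x : ℝ) :
    HasDerivAt (fun x : ℝ => -rexp (-x^2/2)) (x * rexp (-x^2/2)) x := by
  have hi : HasDerivAt (fun x : ℝ => -x^2/2) (-x) x := by
    have := ((hasDerivAt_pow 2 x).neg).div_const 2
    refine this.congr_deriv ?_; push_cast; ring
  have := ((Real.hasDerivAt_exp (-x^2/2)).comp x hi).neg
  refine this.congr_deriv ?_
  ring

lemma integral_x_exp_half : ∫ x : ℝ, x * rexp (-x^2/2) = 0 := by
  have hint : Integrable (fun x : ℝ => x * rexp (-x^2/2)) := by
    simpa using int_pow_exp 1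
  have hIic : ∫ x in Iic (0:ℝ), x * rexp (-x^2/2) = (fun x : ℝ => -rexp (-x^2/2)) 0 - 0 := by
    apply MeasureTheory.integral_Iic_of_hasDerivAt_of_tendsto'
      (fun x _ => hasDerivAt_negexp x) hint.integrableOn
    simpa using (tendsto_exp_half.mono_left myBot).neg
  have hIoi : ∫ x in Ioi (0:ℝ), x * rexp (-x^2/2) = 0 - (fun x : ℝ => -rexp (-x^2/2)) 0 := by
    apply MeasureTheory.integral_Ioi_of_hasDerivAt_of_tendsto'
      (fun x _ => hasDerivAt_negexp x) hint.integrableOn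
    simpa using (tendsto_exp_half.mono_left myTop).neg
  rw [← intervalIntegral.integral_Iic_add_Ioi (b := (0:ℝ)) hint.integrableOn hint.integrableOn,
    hIic, hIoi]
  simp

lemma hasDerivAt_Psi (x : ℝ) :
    HasDerivAt (fun x : ℝ => -x * rexp (-x^2/2))
      (x^2 * rexp (-x^2/2) - rexp (-x^2/2)) x := by
  have h1 : HasDerivAt (fun x : ℝ => -x) (-1) x := (hasDerivAt_id x).neg
  have h2 : HasDerivAt (fun x : ℝ => rexp (-x^2/2)) (-(x * rexp (-x^2/2))) x := by
    have := (hasDerivAt_negexp x).neg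
    simp only [neg_neg, Pi.neg_def] at this
    exact this
  have := h1.mul h2
  refine this.congr_deriv ?_
  ring

lemma integral_sq_exp_half : ∫ x : ℝ, x^2 * rexp (-x^2/2) = Real.sqrt (2*π) := by
  have hint2 : Integrable (fun x : ℝ => x^2 * rexp (-x^2/2)) := int_pow_exp 2
  have hIoi : ∫ x in Ioi (0:ℝ), (x^2 * rexp (-x^2/2) - rexp (-x^2/2)) = 0 := by
    have h := MeasureTheory.integral_Ioi_of_hasDerivAt_of_tendsto' (m := 0)
      (fun x (_ : x ∈ Ici (0:ℝ)) => hasDerivAt_Psi x)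
      ((hint2.sub int_exp).integrableOn)
      (by simpa using (tendsto_x_exp_half.mono_left myTop).neg)
    simpa using h
  have hsplit : ∫ x in Ioi (0:ℝ), x^2 * rexp (-x^2/2) = ∫ x in Ioi (0:ℝ), rexp (-x^2/2) := by
    have := MeasureTheory.integral_sub (hint2.integrableOn (s := Ioi (0:ℝ)))
      (int_exp.integrableOn (s := Ioi (0:ℝ)))
    rw [this] at hIoi
    linarith
  have even2 : ∫ x : ℝ, x^2 * rexp (-x^2/2) = 2 * ∫ x in Ioi (0:ℝ), x^2 * rexp (-x^2/2) := by
    rw [← integral_comp_abs (f := fun x : ℝ => x^2 * rexp (-x^2/2))]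
    congr 1
    funext x
    rw [sq_abs]
  have even0 : ∫ x : ℝ, rexp (-x^2/2) = 2 * ∫ x in Ioi (0:ℝ), rexp (-x^2/2) := by
    rw [← integral_comp_abs (f := fun x : ℝ => rexp (-x^2/2))]
    congr 1
    funext x
    rw [sq_abs]
  rw [even2, hsplit, ← even0, integral_exp_half]



noncomputable def c : ℝ := (Real.sqrt (2*π))⁻¹

lemma c_pos : 0 < c := by
  rw [c]
  positivity

lemma pdf01 : gaussianPDFReal 0 1 = fun z : ℝ => c * rexp (-z^2/2) := by
  funext z
  simp [gaussianPDFReal, c]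

lemma gamma_eq : gaussianReal 0 1 =
    volume.withDensity (fun z => ((gaussianPDFReal 0 1 z).toNNReal : ℝ≥0∞)) := by
  rw [gaussianReal_of_var_ne_zero _ one_ne_zero]
  rfl

lemma integral_gamma (g : ℝ → ℝ) :
    ∫ z, g z ∂(gaussianReal 0 1) = ∫ z, gaussianPDFReal 0 1 z * g z := by
  rw [gamma_eq, integral_withDensity_eq_integral_smul
    (measurable_gaussianPDFReal 0 1).real_toNNReal]
  congr 1
  funext z
  rw [NNReal.smul_def, Real.coe_toNNReal _ (gaussianPDFReal_nonneg 0 1 z), smul_eq_mul]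

lemma integrable_gamma_iff (g : ℝ → ℝ) :
    Integrable g (gaussianReal 0 1) ↔
      Integrable (fun z => gaussianPDFReal 0 1 z * g z) volume := by
  rw [gamma_eq, integrable_withDensity_iff_integrable_smul
    (measurable_gaussianPDFReal 0 1).real_toNNReal]
  constructor <;> intro h <;> refine h.congr (ae_of_all _ fun z => ?_) <;>
    simp only [NNReal.smul_def, Real.coe_toNNReal _ (gaussianPDFReal_nonneg 0 1 z), smul_eq_mul]

lemma integral_id_gamma : ∫ z, z ∂(gaussianReal 0 1) = 0 := by
  rw [integral_gamma, pdf01]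
  simp_rw [mul_assoc, mul_comm (rexp _)]
  rw [MeasureTheory.integral_const_mul, integral_x_exp_half, mul_zero]

lemma sqrt_two_pi_ne : Real.sqrt (2*π) ≠ 0 := by positivity

lemma integral_sq_gamma : ∫ z, z^2 ∂(gaussianReal 0 1) = 1 := by
  rw [integral_gamma, pdf01]
  simp_rw [mul_assoc, mul_comm (rexp _)]
  rw [MeasureTheory.integral_const_mul, integral_sq_exp_half, c,
    inv_mul_cancel₀ sqrt_two_pi_ne]

lemma integrable_quart_gamma : Integrable (fun z => (1+|z|)^4) (gaussianReal 0 1) := by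
  rw [integrable_gamma_iff, pdf01]
  have hbound : Integrable (fun z : ℝ => c * (16 * (rexp (-z^2/2) + z^4 * rexp (-z^2/2)))) :=
    ((int_exp.add (int_pow_exp 4)).const_mul 16).const_mul c
  apply hbound.mono'
  · apply AEStronglyMeasurable.mul
    · exact (Continuous.aestronglyMeasurable (by continuity))
    · exact ((measurable_const.add (_root_.continuous_abs.measurable)).pow_const 4).aestronglyMeasurable
  · refine ae_of_all _ fun z => ?_
    have h1 : (0:ℝ) ≤ rexp (-z^2/2) := (Real.exp_pos _).le
    have h2 : (1+|z|)^4 ≤ 16 * (1 + z^4) := by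
      have ht : (0:ℝ) ≤ |z| := abs_nonneg z
      have hz4 : z^4 = |z|^4 := by
        rw [pow_abs, abs_of_nonneg (by positivity)]
      rw [hz4]
      nlinarith [sq_nonneg (|z| - 1), sq_nonneg (|z|^2 - 1), sq_nonneg (|z|^2 - |z|), sq_nonneg (|z| + 1)]
    rw [Real.norm_eq_abs, abs_of_nonneg (mul_nonneg (mul_nonneg c_pos.le h1) (by positivity))]
    calc c * rexp (-z^2/2) * (1+|z|)^4 ≤ c * rexp (-z^2/2) * (16 * (1 + z^4)) := by
          apply mul_le_mul_of_nonneg_left h2 (mul_nonneg c_pos.le h1)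
      _ = c * (16 * (rexp (-z^2/2) + z^4 * rexp (-z^2/2))) := by ring



lemma continuous_tanh' : Continuous Real.tanh := by
  rw [show Real.tanh = fun x => Real.sinh x / Real.cosh x from funext fun x => Real.tanh_eq_sinh_div_cosh x]
  exact Real.continuous_sinh.div Real.continuous_cosh fun x => (Real.cosh_pos x).ne'

lemma one_le_base (z : ℝ) : (1:ℝ) ≤ 1 + |z| := by
  have := abs_nonneg z; linarith

lemma integrable_cube_gamma : Integrable (fun z : ℝ => (1+|z|)^3) (gaussianReal 0 1) := by
  apply integrable_quart_gamma.mono'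
  · exact ((measurable_const.add _root_.continuous_abs.measurable).pow_const 3).aestronglyMeasurable
  · refine ae_of_all _ fun z => ?_
    rw [Real.norm_eq_abs, abs_of_nonneg (by positivity)]
    exact pow_le_pow_right₀ (one_le_base z) (by norm_num)

lemma integrable_id_gamma : Integrable (fun z : ℝ => z) (gaussianReal 0 1) := by
  apply integrable_quart_gamma.mono' measurable_id.aestronglyMeasurable
  refine ae_of_all _ fun z => ?_
  rw [Real.norm_eq_abs]
  calc |z| ≤ 1 + |z| := by linarith [abs_nonneg z]
    _ = (1 + |z|)^1 := (pow_one _).symm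
    _ ≤ (1 + |z|)^4 := pow_le_pow_right₀ (one_le_base z) (by norm_num)

lemma integrable_sq_gamma' : Integrable (fun z : ℝ => z^2) (gaussianReal 0 1) := by
  apply integrable_quart_gamma.mono' (continuous_pow 2).measurable.aestronglyMeasurable
  refine ae_of_all _ fun z => ?_
  rw [Real.norm_eq_abs, abs_of_nonneg (sq_nonneg z), ← sq_abs]
  calc |z|^2 ≤ (1 + |z|)^2 := by nlinarith [abs_nonneg z]
    _ ≤ (1 + |z|)^4 := pow_le_pow_right₀ (one_le_base z) (by norm_num)

lemma integral_gauss1 (σ : ℝ) (hσ : 0 < σ) (f : ℝ → ℝ) (hf : Measurable f) :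
    ∫ y, f y ∂(gaussianReal 1 (σ^2).toNNReal)
      = ∫ z, f (σ * z + 1) ∂(gaussianReal 0 1) := by
  have hv : ((⟨σ^2, sq_nonneg σ⟩ : ℝ≥0) * 1) = (σ^2).toNNReal := by
    ext
    simp [Real.coe_toNNReal _ (sq_nonneg σ)]
  have h1 : gaussianReal 0 (σ^2).toNNReal = (gaussianReal 0 1).map (σ * ·) := by
    rw [gaussianReal_map_const_mul σ, mul_zero, ← hv]
    exact congrArg _ (NNReal.eq (by simp; rfl))
  have h2 : gaussianReal 1 (σ^2).toNNReal
      = (gaussianReal 0 (σ^2).toNNReal).map (· + 1) := by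
    rw [gaussianReal_map_add_const 1, zero_add]
  rw [h2, h1, Measure.map_map (measurable_add_const 1) (measurable_const_mul σ)]
  rw [integral_map (by fun_prop) hf.aestronglyMeasurable]
  rfl

noncomputable def C3 : ℝ := ∫ z, (1+|z|)^3 ∂(gaussianReal 0 1)
noncomputable def C4 : ℝ := ∫ z, (1+|z|)^4 ∂(gaussianReal 0 1)

lemma C4_nonneg : 0 ≤ C4 := integral_nonneg fun z => by positivity

lemma est1 (σ : ℝ) (hσ : 1 ≤ σ) :
    |σ^2 * (∫ y, Real.tanh (y / σ^2) ∂(gaussianReal 1 (σ^2).toNNReal)) - 1| ≤ C3 / σ := by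
  have hσ0 : (0:ℝ) < σ := lt_of_lt_of_le one_pos hσ
  have hs2 : (0:ℝ) < σ^2 := by positivity
  rw [integral_gauss1 σ hσ0 (fun y => Real.tanh (y / σ^2)) (continuous_tanh'.measurable.comp (measurable_id.div_const _))]
  set γ := gaussianReal 0 1
  set A : ℝ → ℝ := fun z => Real.tanh ((σ * z + 1) / σ^2) with hA
  set B : ℝ → ℝ := fun z => σ * z + 1 with hBdef
  have hPM : IsProbabilityMeasure γ := by infer_instance
  have hAcont : Continuous A := continuous_tanh'.comp (by continuity)
  have hintA : Integrable A γ := by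
    apply (integrable_const (1:ℝ)).mono' hAcont.aestronglyMeasurable
    exact ae_of_all _ fun z => by simpa [Real.norm_eq_abs] using abs_tanh_le_one ((σ * z + 1) / σ^2)
  have hintB : Integrable B γ :=
    (integrable_id_gamma.const_mul σ).add (integrable_const 1)
  have hB : ∫ z, B z ∂γ = 1 := by
    rw [hBdef]
    rw [integral_add (integrable_id_gamma.const_mul σ) (integrable_const 1),
      MeasureTheory.integral_const_mul, integral_id_gamma]
    simp
  have key : ∫ z, (σ^2 * A z - B z) ∂γ = σ^2 * (∫ z, A z ∂γ) - 1 := by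
    rw [integral_sub (hintA.const_mul _) hintB, MeasureTheory.integral_const_mul, hB]
  have hpt : ∀ z : ℝ, |σ^2 * A z - B z| ≤ (1+|z|)^3 / σ := by
    intro z
    have hx : σ^2 * (B z / σ^2) = B z := by field_simp
    have h1 : σ^2 * A z - B z = σ^2 * (Real.tanh (B z / σ^2) - B z / σ^2) := by
      rw [mul_sub, hx]
    have h2 : |σ^2 * A z - B z| ≤ σ^2 * |B z / σ^2|^3 := by
      rw [h1, abs_mul, abs_of_pos hs2]
      exact mul_le_mul_of_nonneg_left (abs_tanh_sub_self _) hs2.le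
    have hBb : |B z| ≤ σ * (1 + |z|) := by
      calc |B z| ≤ |σ * z| + 1 := by rw [hBdef]; simpa using abs_add_le (σ*z) 1
        _ = σ * |z| + 1 := by rw [abs_mul, abs_of_pos hσ0]
        _ ≤ σ * (1 + |z|) := by nlinarith [abs_nonneg z]
    have h3 : |B z / σ^2|^3 ≤ (σ * (1+|z|))^3 / (σ^2)^3 := by
      rw [abs_div, abs_of_pos hs2, div_pow]
      apply div_le_div_of_nonneg_right _ (by positivity)
      exact pow_le_pow_left₀ (abs_nonneg _) hBb 3
    calc |σ^2 * A z - B z| ≤ σ^2 * ((σ * (1+|z|))^3 / (σ^2)^3) :=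
          h2.trans (mul_le_mul_of_nonneg_left h3 hs2.le)
      _ = (1+|z|)^3 / σ := by field_simp; try ring
  calc |σ^2 * (∫ z, A z ∂γ) - 1| = |∫ z, (σ^2 * A z - B z) ∂γ| := by rw [key]
    _ ≤ ∫ z, |σ^2 * A z - B z| ∂γ := by
        simpa [Real.norm_eq_abs] using
          MeasureTheory.norm_integral_le_integral_norm (μ := γ) (fun z => σ^2 * A z - B z)
    _ ≤ ∫ z, (1+|z|)^3 / σ ∂γ := by
        apply integral_mono ((hintA.const_mul _).sub hintB).abs
          (integrable_cube_gamma.div_const σ) hpt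
    _ = C3 / σ := by exact (integral_div _ _).trans rfl

lemma est2 (σ : ℝ) (hσ : 1 ≤ σ) :
    |σ^2 * (∫ y, (Real.tanh (y / σ^2))^2 ∂(gaussianReal 1 (σ^2).toNNReal)) - 1|
      ≤ (2*C4 + 1) / σ := by
  have hσ0 : (0:ℝ) < σ := lt_of_lt_of_le one_pos hσ
  have hs2 : (0:ℝ) < σ^2 := by positivity
  rw [integral_gauss1 σ hσ0 (fun y => (Real.tanh (y / σ^2))^2)
    ((continuous_tanh'.comp (continuous_id.div_const _)).pow 2).measurable]
  set γ := gaussianReal 0 1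
  set A : ℝ → ℝ := fun z => (Real.tanh ((σ * z + 1) / σ^2))^2 with hA
  set B : ℝ → ℝ := fun z => σ * z + 1 with hBdef
  have hPM : IsProbabilityMeasure γ := by infer_instance
  have hAcont : Continuous A := (continuous_tanh'.comp (by continuity)).pow 2
  have hintA : Integrable A γ := by
    apply (integrable_const (1:ℝ)).mono' hAcont.aestronglyMeasurable
    refine ae_of_all _ fun z => ?_
    have h := abs_tanh_le_one ((σ * z + 1) / σ^2)
    rw [Real.norm_eq_abs, hA]
    calc |Real.tanh ((σ * z + 1) / σ^2) ^ 2| = |Real.tanh ((σ * z + 1) / σ^2)|^2 := by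
          rw [← pow_abs]
      _ ≤ 1 := by nlinarith [abs_nonneg (Real.tanh ((σ * z + 1) / σ^2))]
  have hintB2 : Integrable (fun z => (B z)^2 / σ^2) γ := by
    have : (fun z => (B z)^2 / σ^2)
        = fun z => (σ^2/σ^2) * z^2 + ((2*σ/σ^2) * z + 1/σ^2) := by
      funext z; rw [hBdef]; field_simp; ring
    rw [this]
    exact (integrable_sq_gamma'.const_mul _).add
      ((integrable_id_gamma.const_mul _).add (integrable_const _))
  have hB2 : ∫ z, (B z)^2 / σ^2 ∂γ = 1 + 1/σ^2 := by
    have e : (fun z => (B z)^2 / σ^2)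
        = fun z => (σ^2/σ^2) * z^2 + ((2*σ/σ^2) * z + 1/σ^2) := by
      funext z; rw [hBdef]; field_simp; ring
    have hf1 : Integrable (fun z : ℝ => σ^2/σ^2 * z^2) γ := integrable_sq_gamma'.const_mul _
    have hf2 : Integrable (fun z : ℝ => 2*σ/σ^2 * z) γ := integrable_id_gamma.const_mul _
    have hf3 : Integrable (fun _ : ℝ => 1/σ^2) γ := integrable_const _
    have hf23 : Integrable (fun z : ℝ => 2*σ/σ^2 * z + 1/σ^2) γ := hf2.add hf3
    rw [e, integral_add hf1 hf23, integral_add hf2 hf3,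
      MeasureTheory.integral_const_mul, MeasureTheory.integral_const_mul,
      integral_sq_gamma, integral_id_gamma]
    have : σ^2/σ^2 = 1 := div_self hs2.ne'
    simp [this]
  have key : ∫ z, (σ^2 * A z - (B z)^2/σ^2) ∂γ
      = σ^2 * (∫ z, A z ∂γ) - (1 + 1/σ^2) := by
    rw [integral_sub (hintA.const_mul _) hintB2, MeasureTheory.integral_const_mul, hB2]
  have hpt : ∀ z : ℝ, |σ^2 * A z - (B z)^2/σ^2| ≤ 2*(1+|z|)^4 / σ^2 := by
    intro z
    have hx : σ^2 * (B z / σ^2)^2 = (B z)^2/σ^2 := by field_simp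
    have h1 : σ^2 * A z - (B z)^2/σ^2
        = σ^2 * ((Real.tanh (B z / σ^2))^2 - (B z / σ^2)^2) := by
      rw [mul_sub, hx]
    have h2 : |σ^2 * A z - (B z)^2/σ^2| ≤ σ^2 * (2 * (B z/σ^2)^4) := by
      rw [h1, abs_mul, abs_of_pos hs2]
      exact mul_le_mul_of_nonneg_left (abs_tanh_sq_sub_sq _) hs2.le
    have hBb : |B z| ≤ σ * (1 + |z|) := by
      calc |B z| ≤ |σ * z| + 1 := by rw [hBdef]; simpa using abs_add_le (σ*z) 1
        _ = σ * |z| + 1 := by rw [abs_mul, abs_of_pos hσ0]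
        _ ≤ σ * (1 + |z|) := by nlinarith [abs_nonneg z]
    have h3 : (B z/σ^2)^4 ≤ (σ * (1+|z|))^4 / (σ^2)^4 := by
      have : (B z/σ^2)^4 = |B z/σ^2|^4 := by
        rw [pow_abs, abs_of_nonneg (by positivity)]
      rw [this, abs_div, abs_of_pos hs2, div_pow]
      apply div_le_div_of_nonneg_right _ (by positivity)
      exact pow_le_pow_left₀ (abs_nonneg _) hBb 4
    calc |σ^2 * A z - (B z)^2/σ^2| ≤ σ^2 * (2 * ((σ * (1+|z|))^4 / (σ^2)^4)) :=
          h2.trans (by nlinarith [h3, hs2.le])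
      _ = 2 * (1+|z|)^4 / σ^2 := by field_simp; try ring
  have hmain : |σ^2 * (∫ z, A z ∂γ) - (1 + 1/σ^2)| ≤ 2*C4 / σ^2 := by
    calc |σ^2 * (∫ z, A z ∂γ) - (1 + 1/σ^2)|
        = |∫ z, (σ^2 * A z - (B z)^2/σ^2) ∂γ| := by rw [key]
      _ ≤ ∫ z, |σ^2 * A z - (B z)^2/σ^2| ∂γ := by
        simpa [Real.norm_eq_abs] using
          MeasureTheory.norm_integral_le_integral_norm (μ := γ) (fun z => σ^2 * A z - (B z)^2/σ^2)
      _ ≤ ∫ z, 2*(1+|z|)^4 / σ^2 ∂γ := by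
          apply integral_mono ((hintA.const_mul _).sub hintB2).abs
            ((integrable_quart_gamma.const_mul 2).div_const _) hpt
      _ = 2*C4 / σ^2 := by
          simp_rw [mul_div_assoc]
          rw [MeasureTheory.integral_const_mul, integral_div]
          rfl
  have hfrac : 2*C4/σ^2 + 1/σ^2 ≤ (2*C4 + 1)/σ := by
    rw [← add_div, div_le_div_iff₀ (by positivity) hσ0]
    have h : σ ≤ σ^2 := by nlinarith
    exact mul_le_mul_of_nonneg_left h (by linarith [C4_nonneg])
  calc |σ^2 * (∫ z, A z ∂γ) - 1|
      ≤ |σ^2 * (∫ z, A z ∂γ) - (1 + 1/σ^2)| + |1/σ^2| := by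
        have := abs_sub_abs_le_abs_sub (σ^2 * (∫ z, A z ∂γ) - 1) (1/σ^2)
        calc |σ^2 * (∫ z, A z ∂γ) - 1|
            = |(σ^2 * (∫ z, A z ∂γ) - (1 + 1/σ^2)) + 1/σ^2| := by congr 1; ring
          _ ≤ _ := abs_add_le _ _
    _ ≤ 2*C4/σ^2 + 1/σ^2 := by
        have : |1/σ^2| = 1/σ^2 := abs_of_pos (by positivity)
        linarith [hmain]
    _ ≤ (2*C4 + 1)/σ := hfrac

end SpreadAux

open MeasureTheory ProbabilityTheory Filter
open SpreadAux

/-- Relation (8) of the paper: for `Y_σ ~ N(1, σ²)` (the AWGN(σ²) output given bit 0) and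
spread `h_σ = tanh(Y_σ/σ²)`, as `σ → ∞` both moments decay like `σ^{−2}`:
`σ²·E[h_σ] → 1` and `σ²·E[h_σ²] → 1`. -/
theorem spread_moments_asymptotics :
    Tendsto (fun σ : ℝ =>
        σ^2 * ∫ y, Real.tanh (y / σ^2) ∂(gaussianReal 1 (σ^2).toNNReal))
      atTop (nhds 1) ∧
    Tendsto (fun σ : ℝ =>
        σ^2 * ∫ y, (Real.tanh (y / σ^2))^2 ∂(gaussianReal 1 (σ^2).toNNReal))
      atTop (nhds 1) := by
  constructor
  · have h0 : Tendsto (fun σ : ℝ => C3 / σ) atTop (nhds 0) :=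
      tendsto_const_nhds.div_atTop tendsto_id
    have h1 : Tendsto (fun σ : ℝ =>
        σ^2 * (∫ y, Real.tanh (y / σ^2) ∂(gaussianReal 1 (σ^2).toNNReal)) - 1)
        atTop (nhds 0) := by
      apply squeeze_zero_norm' _ h0
      filter_upwards [eventually_ge_atTop (1:ℝ)] with σ hσ
      simpa [Real.norm_eq_abs] using est1 σ hσ
    have h2 := h1.add_const 1
    simpa using h2
  · have h0 : Tendsto (fun σ : ℝ => (2*C4+1) / σ) atTop (nhds 0) :=
      tendsto_const_nhds.div_atTop tendsto_id
    have h1 : Tendsto (fun σ : ℝ =>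
        σ^2 * (∫ y, (Real.tanh (y / σ^2))^2 ∂(gaussianReal 1 (σ^2).toNNReal)) - 1)
        atTop (nhds 0) := by
      apply squeeze_zero_norm' _ h0
      filter_upwards [eventually_ge_atTop (1:ℝ)] with σ hσ
      simpa [Real.norm_eq_abs] using est2 σ hσ
    have h2 := h1.add_const 1
    simpa using h2
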